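/- Let p ∈ [0,1] and let T be the set of 4-tuples of Pauli labels with an even number of components in {X, Y} and an even number of components in {Y, Z}. Then the sum over T of the depolarizing weights equals Σ_{i=0}^{4} W_i (p/3)^i (1−p)^{4−i} with (W₀,…,W₄) = (1, 0, 18, 24, 21), which equals 1 − 4p + 8p² − 64p³/9 + 64p⁴/27; consequently the yield of the two-logical-qubit error-detection scheme, Y = (1/2)·P(T), equals (1/2)(1 − 4p + 8p² − 64p³/9 + 64p⁴/27). -/
import Mathlib


/-- Pauli labels `{I, X, Y, Z}`. -/
inductive Pauli | I | X | Y | Z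
deriving DecidableEq, Repr

instance : Fintype Pauli :=
  ⟨{.I, .X, .Y, .Z}, by intro x; cases x <;> decide⟩

/-- The depolarizing weight of a Pauli label: `1 - p` for `I` and `p/3` for `X`, `Y`, `Z`. -/
noncomputable def w (p : ℝ) : Pauli → ℝ
  | .I => 1 - p
  | _ => p / 3

/-- The depolarizing weight of a 4-tuple: the product of the weights of its components. -/
noncomputable def w4 (p : ℝ) (t : Pauli × Pauli × Pauli × Pauli) : ℝ :=
  w p t.1 * w p t.2.1 * w p t.2.2.1 * w p t.2.2.2

/-- The components of a 4-tuple of Pauli labels, as a list. -/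
def comps (t : Pauli × Pauli × Pauli × Pauli) : List Pauli :=
  [t.1, t.2.1, t.2.2.1, t.2.2.2]

/-- The number of X-type components (labels in `{X, Y}`) of a 4-tuple. -/
def xCount (t : Pauli × Pauli × Pauli × Pauli) : ℕ :=
  (comps t).countP (fun P => P = Pauli.X || P = Pauli.Y)

/-- The number of Z-type components (labels in `{Y, Z}`) of a 4-tuple. -/
def zCount (t : Pauli × Pauli × Pauli × Pauli) : ℕ :=
  (comps t).countP (fun P => P = Pauli.Y || P = Pauli.Z)

/-- The set `T` of 4-tuple error patterns producing the all-zero syndrome in the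
two-logical-qubit error-detection scheme using two noisy EPR pairs. -/
def T : Finset (Pauli × Pauli × Pauli × Pauli) :=
  Finset.univ.filter (fun t => Even (xCount t) ∧ Even (zCount t))

lemma sum_pauli (f : Pauli → ℝ) : ∑ x, f x = f .I + f .X + f .Y + f .Z := by
  show (({.I,.X,.Y,.Z} : Finset Pauli).sum f) = _
  rw [show ({.I,.X,.Y,.Z} : Finset Pauli) = insert .I (insert .X (insert .Y {.Z})) from rfl]
  rw [Finset.sum_insert (by decide), Finset.sum_insert (by decide), Finset.sum_insert (by decide), Finset.sum_singleton]; ring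

/-- The Pauli weight enumerator `(W₀, W₁, W₂, W₃, W₄) = (1, 0, 18, 24, 21)`. -/
def W : Fin 5 → ℝ := ![1, 0, 18, 24, 21]

set_option maxHeartbeats 2000000 in
theorem stmt10 (p : ℝ) (hp : p ∈ Set.Icc (0 : ℝ) 1) :
    (∑ t ∈ T, w4 p t) = ∑ i : Fin 5, W i * (p/3)^(i : ℕ) * (1 - p)^(4 - (i : ℕ)) ∧
    (∑ t ∈ T, w4 p t) = 1 - 4*p + 8*p^2 - 64*p^3/9 + 64*p^4/27 ∧
    (1/2 : ℝ) * (∑ t ∈ T, w4 p t)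
      = (1/2) * (1 - 4*p + 8*p^2 - 64*p^3/9 + 64*p^4/27) := by
  have hT : (∑ t ∈ T, w4 p t) = 1 - 4*p + 8*p^2 - 64*p^3/9 + 64*p^4/27 := by
    rw [T, Finset.sum_filter, Fintype.sum_prod_type, sum_pauli]
    simp only [Fintype.sum_prod_type, sum_pauli]
    norm_num (config := { decide := true }) only [w4, w, xCount, zCount, comps]
    simp only [if_true, if_false]
    ring
  refine ⟨?_, hT, by rw [hT]⟩
  rw [hT, Fin.sum_univ_five]
  simp only [W, show ((0:Fin 5):ℕ)=0 from rfl, show ((1:Fin 5):ℕ)=1 from rfl,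
    show ((2:Fin 5):ℕ)=2 from rfl, show ((3:Fin 5):ℕ)=3 from rfl, show ((4:Fin 5):ℕ)=4 from rfl,
    Matrix.cons_val_zero, Matrix.cons_val_one, Matrix.head_cons, Matrix.cons_val_two, Matrix.tail_cons,
    Matrix.cons_val_three, Matrix.cons_val_four]
  norm_num
  ring
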